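/- Let q be a prime power, n a prime number, t a positive integer, and N = nt, so that 𝔽_{q^n} is a subfield of 𝔽_{q^N}. Let m be a positive integer dividing q^n − 1, let 1 ≤ s < k, let a_0, a_s be nonzero elements of the subfield 𝔽_{q^n} of 𝔽_{q^N}, and let V be a k-dimensional 𝔽_q-subspace of 𝔽_{q^N} whose subspace polynomial is L_V(X) = X^{q^k} + a_s X^{q^s} + a_0 X. Assume that a_0^{q^k − q^s} · (a_s^{q^k − 1})^{−1} does not lie in the subfield 𝔽_q of 𝔽_{q^N} (this is the paper's hypothesis that a_s^{(q^k−1)/(q^s−1)} is not ∼_1-equivalent to a_0^{(q^k−q^s)/(q^s−1)}). Then for all i, j ∈ {0, 1, …, n−1} with i ≠ j and all β, δ ∈ 𝔽_{q^N}^*, one has β^m σ_i(V) ≠ δ^m σ_j(V); that is, the n quasi-orbits {α^m σ_i(V) : α ∈ 𝔽_{q^N}^*}, i = 0, …, n−1, are pairwise disjoint. -/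

import Mathlib

open Polynomial

/-- The `m`-quasi cyclic shift of a subspace `V` by `a`: `a • V = {a * v : v ∈ V}`. -/
noncomputable def qshift {K F : Type*} [Field K] [Field F] [Algebra K F]
    (a : F) (V : Submodule K F) : Submodule K F :=
  V.map (LinearMap.mulLeft K a)

/-- The subspace polynomial `L_V(X) = ∏_{v ∈ V} (X - v)` of a subspace `V` of a
finite field. -/
noncomputable def subspacePoly {K F : Type*} [Field K] [Field F] [Algebra K F] [Fintype F]
    (V : Submodule K F) : F[X] :=
  ∏ v ∈ (Set.toFinite (V : Set F)).toFinset, (X - C v)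

/-- The subspace distance `d(U,V) = dim U + dim V - 2 dim (U ⊓ V)`. -/
noncomputable def subspaceDist {K F : Type*} [Field K] [Field F] [Algebra K F]
    (U V : Submodule K F) : ℕ :=
  Module.finrank K U + Module.finrank K V - 2 * Module.finrank K ↥(U ⊓ V)

lemma aux_monic_dvd_eq {F : Type*} [Field F] {a b : F[X]} (ha : a.Monic) (hb : b.Monic)
    (hd : a ∣ b) (hdeg : b.natDegree ≤ a.natDegree) : a = b := by
  classical
  obtain ⟨c, rfl⟩ := hd
  have hc : c ≠ 0 := by rintro rfl; rw [mul_zero] at hb; exact hb.ne_zero rfl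
  have hdm := natDegree_mul ha.ne_zero hc
  have hc0 : c.natDegree = 0 := by omega
  have hcC := Polynomial.eq_C_of_natDegree_eq_zero hc0
  have hl : (a * c).leadingCoeff = 1 := hb
  rw [leadingCoeff_mul, ha.leadingCoeff, one_mul] at hl
  rw [hcC, leadingCoeff_C] at hl
  rw [hcC, hl, map_one, mul_one]

lemma aux_eq_prod {F : Type*} [Field F] {p : F[X]} {S : Finset F} (hmon : p.Monic)
    (hroots : ∀ w ∈ S, p.eval w = 0) (hcard : p.natDegree ≤ S.card) :
    p = ∏ w ∈ S, (X - C w) := by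
  classical
  have hp0 : p ≠ 0 := hmon.ne_zero
  have hle : S.val ≤ p.roots := by
    rw [Multiset.le_iff_count]
    intro r
    by_cases hr : r ∈ S
    · have h1 : S.val.count r = 1 := Multiset.count_eq_one_of_mem S.nodup hr
      rw [h1, count_roots]
      exact (Polynomial.rootMultiplicity_pos hp0).mpr (hroots r hr)
    · rw [Multiset.count_eq_zero_of_notMem (by simpa using hr)]
      exact Nat.zero_le _
  have hdvd : (∏ w ∈ S, (X - C w)) ∣ p := by
    have := (Multiset.prod_X_sub_C_dvd_iff_le_roots hp0 S.val).mpr hle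
    rwa [Finset.prod_eq_multiset_prod]
  have hmp : (∏ w ∈ S, (X - C w)).Monic := monic_prod_of_monic _ _ fun w _ => monic_X_sub_C w
  have hnd : (∏ w ∈ S, (X - C w)).natDegree = S.card := by
    rw [natDegree_prod_of_monic _ _ fun w _ => monic_X_sub_C w]
    simp
  exact (aux_monic_dvd_eq hmp hmon hdvd (by omega)).symm

lemma aux_fixed {K F : Type*} [Field K] [Fintype K] [Field F] [Fintype F] [Algebra K F]
    {q : ℕ} (hq : Fintype.card K = q) {z : F} (hzq : z ^ q = z) :
    z ∈ Set.range (algebraMap K F) := by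
  classical
  have hq2 : 1 < q := hq ▸ Fintype.one_lt_card
  set p : F[X] := X ^ q - X with hp
  have hp0 : p ≠ 0 := FiniteField.X_pow_card_sub_X_ne_zero F hq2
  have hpd : p.natDegree = q := by
    rw [hp, natDegree_sub_eq_left_of_natDegree_lt (by simp; omega)]
    simp
  set T : Finset F := Finset.image (algebraMap K F) Finset.univ with hT
  have hTcard : T.card = q := by
    rw [hT, Finset.card_image_of_injective _ (algebraMap K F).injective, Finset.card_univ, hq]
  have hTroots : T.val ≤ p.roots := by
    rw [Multiset.le_iff_count]
    intro r
    by_cases hr : r ∈ T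
    · have h1 : T.val.count r = 1 := Multiset.count_eq_one_of_mem T.nodup hr
      rw [h1, count_roots]
      apply (Polynomial.rootMultiplicity_pos hp0).mpr
      obtain ⟨x, _, rfl⟩ := Finset.mem_image.mp hr
      have : (algebraMap K F) x ^ q = algebraMap K F x := by
        rw [← map_pow]
        congr 1
        rw [← hq]; exact FiniteField.pow_card x
      simp [IsRoot, hp, this]
    · rw [Multiset.count_eq_zero_of_notMem (by simpa using hr)]
      exact Nat.zero_le _
  have hcard : Multiset.card p.roots ≤ q := hpd ▸ (p.card_roots' : _)
  have heq : T.val = p.roots := Multiset.eq_of_le_of_card_le hTroots (le_trans hcard hTcard.ge)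
  have hzroot : z ∈ p.roots := by
    rw [mem_roots hp0]
    simp [IsRoot, hp, hzq]
  rw [← heq] at hzroot
  obtain ⟨x, _, rfl⟩ := Finset.mem_image.mp hzroot
  exact ⟨x, rfl⟩

lemma aux_pow_iter {F : Type*} [Field F] {q d : ℕ} {z : F} (h : z ^ q ^ d = z) :
    ∀ a : ℕ, z ^ q ^ (d * a) = z := by
  intro a
  induction a with
  | zero => simp
  | succ a ih =>
    rw [Nat.mul_succ, pow_add, pow_mul, ih, h]

lemma aux_desc {F : Type*} [Field F] {q n d : ℕ} (hn : n.Prime) (hd0 : 0 < d) (hdn : d < n)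
    {z : F} (h1 : z ^ q ^ d = z) (h2 : z ^ q ^ n = z) : z ^ q = z := by
  have hco : Nat.Coprime d n :=
    Nat.coprime_comm.mp ((hn.coprime_iff_not_dvd).mpr (Nat.not_dvd_of_pos_of_lt hd0 hdn))
  obtain ⟨x, -, hx⟩ := Nat.exists_mul_mod_eq_one_of_coprime hco hn.one_lt
  have hdx : d * x = n * (d * x / n) + 1 := by
    conv_lhs => rw [← Nat.div_add_mod (d * x) n]
    rw [hx]
  have h3 : z ^ q ^ (d * x) = z := aux_pow_iter h1 x
  rw [hdx, pow_add, pow_mul, pow_one, aux_pow_iter h2 (d * x / n)] at h3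
  exact h3

lemma tri_monic {F : Type*} [Field F] (A B : F) {a b : ℕ} (hb : b < a) (h1 : 1 < a) :
    (X ^ a + C A * X ^ b + C B * X : F[X]).Monic := by
  rw [add_assoc]
  apply (monic_X_pow a).add_of_left
  rw [degree_X_pow]
  apply lt_of_le_of_lt (degree_add_le _ _)
  apply max_lt
  · exact lt_of_le_of_lt (degree_C_mul_X_pow_le b A) (by exact_mod_cast hb)
  · exact lt_of_le_of_lt (degree_C_mul_X_le B) (by exact_mod_cast h1)

lemma tri_natDegree {F : Type*} [Field F] (A B : F) {a b : ℕ} (hb : b < a) (h1 : 1 < a) :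
    (X ^ a + C A * X ^ b + C B * X : F[X]).natDegree = a := by
  have hd : (X ^ a + C A * X ^ b + C B * X : F[X]).degree = a := by
    rw [add_assoc, degree_add_eq_left_of_degree_lt, degree_X_pow]
    rw [degree_X_pow]
    apply lt_of_le_of_lt (degree_add_le _ _)
    apply max_lt
    · exact lt_of_le_of_lt (degree_C_mul_X_pow_le b A) (by exact_mod_cast hb)
    · exact lt_of_le_of_lt (degree_C_mul_X_le B) (by exact_mod_cast h1)
  exact natDegree_eq_of_degree_eq_some hd

lemma tri_coeff_b {F : Type*} [Field F] (A B : F) {a b : ℕ} (hb : b < a) (h1 : 1 < b) :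
    (X ^ a + C A * X ^ b + C B * X : F[X]).coeff b = A := by
  have h2 : b ≠ a := hb.ne
  have h3 : b ≠ 1 := h1.ne'
  simp [coeff_add, coeff_X_pow, coeff_C_mul, coeff_X, h2, h3, Ne.symm h3]

lemma tri_coeff_one {F : Type*} [Field F] (A B : F) {a b : ℕ} (hb : b < a) (h1 : 1 < b) :
    (X ^ a + C A * X ^ b + C B * X : F[X]).coeff 1 = B := by
  have h2 : (1:ℕ) ≠ a := by omega
  have h3 : (1:ℕ) ≠ b := by omega
  simp [coeff_add, coeff_X_pow, coeff_C_mul, coeff_X, h2, h3, Ne.symm h3, Ne.symm h2]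

theorem frobenius_quasi_orbits_pairwise_disjoint
    {K F : Type*} [Field K] [Fintype K] [Field F] [Fintype F] [Algebra K F]
    (q n t N m k s : ℕ) (hq : Fintype.card K = q)
    (hnp : n.Prime) (ht : 0 < t) (hN : N = n * t)
    (hF : Module.finrank K F = N) (hm : 0 < m) (hmdvd : m ∣ q ^ n - 1)
    (hs1 : 1 ≤ s) (hsk : s < k)
    (a0 as : F) (ha0 : a0 ≠ 0) (has : as ≠ 0)
    (ha0sub : a0 ^ q ^ n = a0) (hassub : as ^ q ^ n = as)
    (V : Submodule K F) (hVk : Module.finrank K ↥V = k)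
    (hLV : subspacePoly V = X ^ q ^ k + C as * X ^ q ^ s + C a0 * X)
    (hz : a0 ^ (q ^ k - q ^ s) * (as ^ (q ^ k - 1))⁻¹ ∉ Set.range (algebraMap K F)) :
    ∀ i j : ℕ, i < n → j < n → i ≠ j → ∀ β δ : F, β ≠ 0 → δ ≠ 0 →
      (fun v => β ^ m * v ^ q ^ i) '' (V : Set F) ≠
        (fun v => δ ^ m * v ^ q ^ j) '' (V : Set F) := by
  classical
  intro i j hi hj hij β δ hβ hδ heq
  -- basic numerics
  have hq2 : 1 < q := hq ▸ Fintype.one_lt_card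
  have one_lt_qs : 1 < q ^ s := Nat.one_lt_pow (by omega) hq2
  have qs_lt : q ^ s < q ^ k := Nat.pow_lt_pow_right hq2 hsk
  have one_lt_qk : 1 < q ^ k := lt_trans one_lt_qs qs_lt
  set e1 := q ^ k - q ^ s with he1def
  set e2 := q ^ k - 1 with he2def
  have he1 : e1 + q ^ s = q ^ k := by omega
  have he2 : e2 + 1 = q ^ k := by omega
  have he1pos : 0 < e1 := by omega
  have he2pos : 0 < e2 := by omega
  -- characteristic
  set pc := ringChar K with hpc
  haveI : CharP K pc := ringChar.charP K
  obtain ⟨e, hpp, hcard⟩ := FiniteField.card K pc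
  haveI := Fact.mk hpp
  haveI : CharP F pc := charP_of_injective_algebraMap (algebraMap K F).injective pc
  have hqpe : q = pc ^ (e : ℕ) := by rw [← hq, hcard]
  have frob_add : ∀ (x y : F) (r : ℕ), (x + y) ^ q ^ r = x ^ q ^ r + y ^ q ^ r := by
    intro x y r
    rw [hqpe, ← pow_mul]
    exact add_pow_char_pow ..
  -- cardinality of F and injectivity of Frobenius powers
  have hcardF : Fintype.card F = q ^ N := by
    rw [Module.card_fintype (Module.finBasis K F), hq, Fintype.card_fin, hF]
  have powN : ∀ x : F, x ^ q ^ N = x := by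
    intro x; rw [← hcardF]; exact FiniteField.pow_card x
  have hnN : n ≤ N := by rw [hN]; exact Nat.le_mul_of_pos_right n ht
  have powinj : ∀ r, r ≤ N → ∀ x y : F, x ^ q ^ r = y ^ q ^ r → x = y := by
    intro r hr x y h
    have h2 := congrArg (· ^ q ^ (N - r)) h
    simp only [← pow_mul, ← pow_add] at h2
    rwa [Nat.add_sub_cancel' hr, powN, powN] at h2
  -- the finset underlying V
  set Vfin := (Set.toFinite (V : Set F)).toFinset with hVfindef
  have hsp : subspacePoly V = ∏ v ∈ Vfin, (X - C v) := rfl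
  have hVfincoe : (↑Vfin : Set F) = (V : Set F) := Set.Finite.coe_toFinset _
  have hmem : ∀ x : F, x ∈ Vfin ↔ x ^ q ^ k + as * x ^ q ^ s + a0 * x = 0 := by
    intro x
    have h := congrArg (eval x) hLV
    simp only [hsp, eval_prod, eval_sub, eval_X, eval_C, eval_add, eval_mul, eval_pow] at h
    constructor
    · intro hx
      rw [← h]
      exact Finset.prod_eq_zero hx (sub_self x)
    · intro hx
      rw [← h] at hx
      obtain ⟨v, hvm, hv0⟩ := Finset.prod_eq_zero_iff.mp hx
      exact (sub_eq_zero.mp hv0) ▸ hvm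
  have cardV : Vfin.card = q ^ k := by
    have h := congrArg natDegree hLV
    rw [tri_natDegree as a0 qs_lt one_lt_qk, hsp,
      natDegree_prod_of_monic _ _ (fun v _ => monic_X_sub_C v)] at h
    simpa using h
  -- evaluation of shifted trinomials
  have evalP : ∀ (γ : F) (r : ℕ), ∀ v ∈ Vfin,
      eval (γ ^ m * v ^ q ^ r)
        (X ^ q ^ k + C (as ^ q ^ r * γ ^ (m * e1)) * X ^ q ^ s
          + C (a0 ^ q ^ r * γ ^ (m * e2)) * X) = 0 := by
    intro γ r v hv
    have hv0 : v ^ q ^ k + as * v ^ q ^ s + a0 * v = 0 := (hmem v).mp hv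
    have hγ1 : γ ^ (m * e1) * γ ^ (m * q ^ s) = γ ^ (m * q ^ k) := by
      rw [← pow_add, ← Nat.mul_add, he1]
    have hγ2 : γ ^ (m * e2) * γ ^ m = γ ^ (m * q ^ k) := by
      have hme : m * e2 + m = m * q ^ k := by rw [← he2]; ring
      rw [← pow_add, hme]
    have key : (γ ^ m * v ^ q ^ r) ^ q ^ k
        + as ^ q ^ r * γ ^ (m * e1) * (γ ^ m * v ^ q ^ r) ^ q ^ s
        + a0 ^ q ^ r * γ ^ (m * e2) * (γ ^ m * v ^ q ^ r)
        = γ ^ (m * q ^ k) * ((v ^ q ^ k + as * v ^ q ^ s + a0 * v) ^ q ^ r) := by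
      rw [frob_add (v ^ q ^ k + as * v ^ q ^ s) (a0 * v) r,
        frob_add (v ^ q ^ k) (as * v ^ q ^ s) r]
      simp only [mul_pow, ← pow_mul]
      linear_combination (as ^ q ^ r * v ^ (q ^ s * q ^ r)) * hγ1
        + (a0 ^ q ^ r * v ^ q ^ r) * hγ2
    simp only [eval_add, eval_mul, eval_pow, eval_C, eval_X]
    rw [key, hv0, zero_pow (by positivity), mul_zero]
  -- image finsets
  have hinj : ∀ (γ : F), γ ≠ 0 → ∀ r, r ≤ N →
      Function.Injective (fun v : F => γ ^ m * v ^ q ^ r) := by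
    intro γ hγ r hr x y hxy
    simp only at hxy
    exact powinj r hr x y (mul_left_cancel₀ (pow_ne_zero m hγ) hxy)
  set S1 := Vfin.image (fun v : F => β ^ m * v ^ q ^ i) with hS1def
  set S2 := Vfin.image (fun v : F => δ ^ m * v ^ q ^ j) with hS2def
  have hiN : i ≤ N := le_trans hi.le hnN
  have hjN : j ≤ N := le_trans hj.le hnN
  have hS1card : S1.card = q ^ k := by
    rw [hS1def, Finset.card_image_of_injective _ (hinj β hβ i hiN), cardV]
  have hS2card : S2.card = q ^ k := by
    rw [hS2def, Finset.card_image_of_injective _ (hinj δ hδ j hjN), cardV]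
  have hSS : S1 = S2 := by
    apply Finset.coe_injective
    rw [hS1def, hS2def, Finset.coe_image, Finset.coe_image, hVfincoe, heq]
  -- polynomial identities
  have hP1 : (X ^ q ^ k + C (as ^ q ^ i * β ^ (m * e1)) * X ^ q ^ s
      + C (a0 ^ q ^ i * β ^ (m * e2)) * X) = ∏ w ∈ S1, (X - C w) := by
    apply aux_eq_prod (tri_monic _ _ qs_lt one_lt_qk)
    · intro w hw
      obtain ⟨v, hv, rfl⟩ := Finset.mem_image.mp hw
      exact evalP β i v hv
    · rw [tri_natDegree _ _ qs_lt one_lt_qk, hS1card]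
  have hP2 : (X ^ q ^ k + C (as ^ q ^ j * δ ^ (m * e1)) * X ^ q ^ s
      + C (a0 ^ q ^ j * δ ^ (m * e2)) * X) = ∏ w ∈ S2, (X - C w) := by
    apply aux_eq_prod (tri_monic _ _ qs_lt one_lt_qk)
    · intro w hw
      obtain ⟨v, hv, rfl⟩ := Finset.mem_image.mp hw
      exact evalP δ j v hv
    · rw [tri_natDegree _ _ qs_lt one_lt_qk, hS2card]
  have hPP : (X ^ q ^ k + C (as ^ q ^ i * β ^ (m * e1)) * X ^ q ^ s
      + C (a0 ^ q ^ i * β ^ (m * e2)) * X)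
      = (X ^ q ^ k + C (as ^ q ^ j * δ ^ (m * e1)) * X ^ q ^ s
      + C (a0 ^ q ^ j * δ ^ (m * e2)) * X : F[X]) := by
    rw [hP1, hSS, ← hP2]
  -- coefficient equalities
  have eq1 : as ^ q ^ i * β ^ (m * e1) = as ^ q ^ j * δ ^ (m * e1) := by
    have h := congrArg (fun pl : F[X] => pl.coeff (q ^ s)) hPP
    simpa only [tri_coeff_b _ _ qs_lt one_lt_qs] using h
  have eq2 : a0 ^ q ^ i * β ^ (m * e2) = a0 ^ q ^ j * δ ^ (m * e2) := by
    have h := congrArg (fun pl : F[X] => pl.coeff 1) hPP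
    simpa only [tri_coeff_one _ _ qs_lt one_lt_qs] using h
  -- cross-multiplied key identity
  have E2 : a0 ^ (q ^ i * e1) * β ^ (m * e2 * e1) = a0 ^ (q ^ j * e1) * δ ^ (m * e2 * e1) := by
    have h := congrArg (· ^ e1) eq2
    simpa only [mul_pow, ← pow_mul] using h
  have E1 : as ^ (q ^ i * e2) * β ^ (m * e1 * e2) = as ^ (q ^ j * e2) * δ ^ (m * e1 * e2) := by
    have h := congrArg (· ^ e2) eq1
    simpa only [mul_pow, ← pow_mul] using h
  have hmul : m * e1 * e2 = m * e2 * e1 := by ring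
  rw [hmul] at E1
  have hB : β ^ (m * e2 * e1) ≠ 0 := pow_ne_zero _ hβ
  have hD : δ ^ (m * e2 * e1) ≠ 0 := pow_ne_zero _ hδ
  have key : a0 ^ (q ^ i * e1) * as ^ (q ^ j * e2) = a0 ^ (q ^ j * e1) * as ^ (q ^ i * e2) := by
    apply mul_right_cancel₀ (mul_ne_zero hB hD)
    calc a0 ^ (q ^ i * e1) * as ^ (q ^ j * e2) * (β ^ (m * e2 * e1) * δ ^ (m * e2 * e1))
        = (a0 ^ (q ^ i * e1) * β ^ (m * e2 * e1)) * (as ^ (q ^ j * e2) * δ ^ (m * e2 * e1)) := by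
          ring
      _ = (a0 ^ (q ^ j * e1) * δ ^ (m * e2 * e1)) * (as ^ (q ^ i * e2) * β ^ (m * e2 * e1)) := by
          rw [E2, ← E1]
      _ = a0 ^ (q ^ j * e1) * as ^ (q ^ i * e2) * (β ^ (m * e2 * e1) * δ ^ (m * e2 * e1)) := by
          ring
  -- the invariant z
  set z := a0 ^ e1 * (as ^ e2)⁻¹ with hzdef
  have hzne : z ≠ 0 := mul_ne_zero (pow_ne_zero _ ha0) (inv_ne_zero (pow_ne_zero _ has))
  have zfrob : ∀ r : ℕ, z ^ q ^ r = a0 ^ (q ^ r * e1) * (as ^ (q ^ r * e2))⁻¹ := by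
    intro r
    rw [hzdef, mul_pow, inv_pow, ← pow_mul, ← pow_mul, mul_comm e1 (q ^ r), mul_comm e2 (q ^ r)]
  have hasne : ∀ r : ℕ, as ^ (q ^ r * e2) ≠ 0 := fun r => pow_ne_zero _ has
  have hzij : z ^ q ^ i = z ^ q ^ j := by
    rw [zfrob i, zfrob j]
    field_simp
    linear_combination key
  have hzn : z ^ q ^ n = z := by
    rw [zfrob n, pow_mul, pow_mul, ha0sub, hassub]
  -- descend to z ^ q = z
  have hzd : ∃ d, 0 < d ∧ d < n ∧ z ^ q ^ d = z := by
    rcases lt_or_gt_of_ne hij with h | h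
    · refine ⟨j - i, by omega, by omega, ?_⟩
      apply powinj i hiN
      rw [← pow_mul, ← pow_add]
      rw [show j - i + i = j by omega]
      exact hzij.symm
    · refine ⟨i - j, by omega, by omega, ?_⟩
      apply powinj j hjN
      rw [← pow_mul, ← pow_add]
      rw [show i - j + j = i by omega]
      exact hzij
  obtain ⟨d, hd0, hdn, hzd⟩ := hzd
  have hzq : z ^ q = z := aux_desc hnp hd0 hdn hzd hzn
  exact hz (aux_fixed hq hzq)
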